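/- arXiv:2509.19682 — 4 statements merged into one kernel-verified Lean document; each statement's English description precedes it below -/
import Mathlib

section
/- Let η, L > 0, g_0 ≠ 0, β_0 = 0, β_{k+1} = β_k + g_k², α_k = η/√(β_{k+1}). If β_{k+1} < η²L² for all k = 0,…,k_0−1 (with k_0 ≥ 1), then α_k > 1/L for k = 0,…,k_0−1, and the weighted sum satisfies ∑_{k=0}^{k_0−1} α_k g_k² ≤ η³L² / |g_0|. -/
theorem stmt_3 (β g : ℕ → ℝ) (η L : ℝ) (hη : 0 < η) (hL : 0 < L)
    (hg0 : g 0 ≠ 0) (hβ0 : β 0 = 0) (hrec : ∀ k, β (k + 1) = β k + (g k) ^ 2)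
    (α : ℕ → ℝ) (hα : ∀ k, α k = η / Real.sqrt (β (k + 1)))
    (k₀ : ℕ) (hk₀ : 1 ≤ k₀) (hβ : ∀ k < k₀, β (k + 1) < η ^ 2 * L ^ 2) :
    (∀ k < k₀, α k > 1 / L) ∧
      ∑ k ∈ Finset.range k₀, α k * (g k) ^ 2 ≤ η ^ 3 * L ^ 2 / |g 0| := by
  have hg0sq : (0:ℝ) < g 0 ^ 2 := by positivity
  have hβ1 : β 1 = g 0 ^ 2 := by rw [hrec 0, hβ0]; ring
  have hmono : ∀ k, g 0 ^ 2 ≤ β (k + 1) := by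
    intro k
    induction k with
    | zero => rw [hβ1]
    | succ n ih =>
      rw [hrec (n + 1)]
      nlinarith [sq_nonneg (g (n + 1))]
  have hpos : ∀ k, 0 < β (k + 1) := fun k => lt_of_lt_of_le hg0sq (hmono k)
  have hsqrt_lb : ∀ k, |g 0| ≤ Real.sqrt (β (k + 1)) := by
    intro k
    have := Real.sqrt_le_sqrt (hmono k)
    rwa [Real.sqrt_sq_eq_abs] at this
  have hg0abs : (0:ℝ) < |g 0| := abs_pos.mpr hg0
  have hβsum : ∀ n, β n = ∑ k ∈ Finset.range n, (g k) ^ 2 := by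
    intro n
    induction n with
    | zero => simpa using hβ0
    | succ n ih => rw [hrec n, Finset.sum_range_succ, ih]
  constructor
  · intro k hk
    have hs : 0 < Real.sqrt (β (k + 1)) := Real.sqrt_pos.mpr (hpos k)
    have hlt : Real.sqrt (β (k + 1)) < η * L := by
      have : β (k + 1) < (η * L) ^ 2 := by nlinarith [hβ k hk]
      calc Real.sqrt (β (k + 1)) < Real.sqrt ((η * L) ^ 2) :=
            Real.sqrt_lt_sqrt (le_of_lt (hpos k)) this
        _ = η * L := by rw [Real.sqrt_sq (by positivity)]
    rw [hα k, gt_iff_lt, div_lt_div_iff₀ hL hs]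
    nlinarith
  · have hterm : ∀ k, α k * (g k) ^ 2 ≤ η / |g 0| * (g k) ^ 2 := by
      intro k
      have hs : 0 < Real.sqrt (β (k + 1)) := Real.sqrt_pos.mpr (hpos k)
      have : α k ≤ η / |g 0| := by
        rw [hα k]
        exact div_le_div_of_nonneg_left (le_of_lt hη) hg0abs (hsqrt_lb k)
      nlinarith [sq_nonneg (g k)]
    calc ∑ k ∈ Finset.range k₀, α k * (g k) ^ 2
        ≤ ∑ k ∈ Finset.range k₀, η / |g 0| * (g k) ^ 2 :=
          Finset.sum_le_sum (fun k _ => hterm k)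
      _ = η / |g 0| * β k₀ := by rw [hβsum k₀, Finset.mul_sum]
      _ ≤ η ^ 3 * L ^ 2 / |g 0| := by
          obtain ⟨m, rfl⟩ := Nat.exists_eq_add_of_le hk₀
          have hb := hβ m (by omega)
          have hb' : β (1 + m) < η ^ 2 * L ^ 2 := by rwa [add_comm] at hb
          rw [div_mul_eq_mul_div, div_le_div_iff₀ hg0abs hg0abs]
          nlinarith [mul_lt_mul_of_pos_left hb' (mul_pos hη hg0abs)]
end

section
/- Under the AdaGrad-Norm recursion β_0 = 0, β_{k+1} = β_k + g_k², α_k = η/√(β_{k+1}), and the descent inequality f_{k+1} ≤ f_k + (L α_k²/2) g_k², if β_{k+1} < η² L² for k = 0,…,k_0−1, then f_{k_0} ≤ f_0 + η⁴ L³ / (2 g_0²). -/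
theorem stmt_4 (β g f : ℕ → ℝ) (η L : ℝ) (hη : 0 < η) (hL : 0 < L)
    (hg0 : g 0 ≠ 0) (hβ0 : β 0 = 0) (hrec : ∀ k, β (k + 1) = β k + (g k) ^ 2)
    (α : ℕ → ℝ) (hα : ∀ k, α k = η / Real.sqrt (β (k + 1)))
    (hdesc : ∀ k, f (k + 1) ≤ f k + (L * (α k) ^ 2 / 2) * (g k) ^ 2)
    (k₀ : ℕ) (hk₀ : 1 ≤ k₀) (hβ : ∀ k < k₀, β (k + 1) < η ^ 2 * L ^ 2) :
    f k₀ ≤ f 0 + η ^ 4 * L ^ 3 / (2 * (g 0) ^ 2) := by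
  have hg0sq : 0 < g 0 ^ 2 := by positivity
  -- β (k+1) ≥ g0²
  have hlow : ∀ k, g 0 ^ 2 ≤ β (k + 1) := by
    intro k
    induction k with
    | zero => rw [hrec 0, hβ0]; linarith
    | succ n ih =>
      have := sq_nonneg (g (n + 1))
      rw [hrec (n + 1)]; linarith
  -- main induction
  have main : ∀ n, f n ≤ f 0 + (L * η ^ 2 / 2) * β n / g 0 ^ 2 := by
    intro n
    induction n with
    | zero => rw [hβ0]; simp
    | succ n ih =>
      have hβpos : 0 < β (n + 1) := lt_of_lt_of_le hg0sq (hlow n)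
      have hαsq : (α n) ^ 2 = η ^ 2 / β (n + 1) := by
        rw [hα n, div_pow, Real.sq_sqrt hβpos.le]
      have hstep := hdesc n
      rw [hαsq] at hstep
      have h1 : L * (η ^ 2 / β (n + 1)) / 2 * g n ^ 2
          ≤ (L * η ^ 2 / 2) * (g n ^ 2 / g 0 ^ 2) := by
        have hd : (1:ℝ) / β (n + 1) ≤ 1 / g 0 ^ 2 :=
          one_div_le_one_div_of_le hg0sq (hlow n)
        have hmul := mul_le_mul_of_nonneg_left hd
          (show (0:ℝ) ≤ L * η ^ 2 / 2 * g n ^ 2 by positivity)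
        have e1 : L * (η ^ 2 / β (n + 1)) / 2 * g n ^ 2
            = (L * η ^ 2 / 2 * g n ^ 2) * (1 / β (n + 1)) := by ring
        have e2 : L * η ^ 2 / 2 * (g n ^ 2 / g 0 ^ 2)
            = (L * η ^ 2 / 2 * g n ^ 2) * (1 / g 0 ^ 2) := by ring
        rw [e1, e2]; exact hmul
      have hrecn := hrec n
      have : f (n + 1) ≤ f 0 + (L * η ^ 2 / 2) * β n / g 0 ^ 2
          + (L * η ^ 2 / 2) * (g n ^ 2 / g 0 ^ 2) := by linarith
      rw [hrecn]
      calc f (n + 1) ≤ f 0 + (L * η ^ 2 / 2) * β n / g 0 ^ 2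
            + (L * η ^ 2 / 2) * (g n ^ 2 / g 0 ^ 2) := this
        _ = f 0 + L * η ^ 2 / 2 * (β n + g n ^ 2) / g 0 ^ 2 := by ring
  have hk := main k₀
  have hβk : β k₀ < η ^ 2 * L ^ 2 := by
    have := hβ (k₀ - 1) (by omega)
    rwa [Nat.sub_add_cancel hk₀] at this
  have hfinal : (L * η ^ 2 / 2) * β k₀ / g 0 ^ 2 ≤ η ^ 4 * L ^ 3 / (2 * g 0 ^ 2) := by
    rw [div_le_div_iff₀ hg0sq (by positivity)]
    nlinarith [mul_lt_mul_of_pos_left hβk (show (0:ℝ) < L * η ^ 2 * g 0 ^ 2 by positivity)]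
  linarith
end

section
/- Let a, b > 0 and g(t) = a t⁴ − b t³ − (b³/a²) t with minimum value g* = −b⁴/a³. Then for all t ∈ ℝ with t ≠ b/a: (4a t³ − 3b t² − b³/a²)² / (g(t) − g*) = 9a²t⁴/(a t² + b t + b²/a) + (7a t² + b t + b²/a) ≥ 27b²/(28a). In particular, g satisfies a global Polyak–Łojasiewicz inequality with constant μ = 27b²/(28a). -/
theorem stmt_13 (a b : ℝ) (ha : 0 < a) (hb : 0 < b)
    (g : ℝ → ℝ) (hg : ∀ t, g t = a * t ^ 4 - b * t ^ 3 - (b ^ 3 / a ^ 2) * t)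
    (gstar : ℝ) (hgstar : gstar = -b ^ 4 / a ^ 3) :
    ∀ t : ℝ, t ≠ b / a →
      (4 * a * t ^ 3 - 3 * b * t ^ 2 - b ^ 3 / a ^ 2) ^ 2 / (g t - gstar)
          = 9 * a ^ 2 * t ^ 4 / (a * t ^ 2 + b * t + b ^ 2 / a)
            + (7 * a * t ^ 2 + b * t + b ^ 2 / a) ∧
        (4 * a * t ^ 3 - 3 * b * t ^ 2 - b ^ 3 / a ^ 2) ^ 2 / (g t - gstar)
          ≥ 27 * b ^ 2 / (28 * a) := by
  intro t ht
  have ha' : a ≠ 0 := ne_of_gt ha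
  set Q : ℝ := a * t ^ 2 + b * t + b ^ 2 / a with hQdef
  set P : ℝ := 4 * a * t ^ 2 + b * t + b ^ 2 / a with hPdef
  have hQ : 0 < Q := by
    have h2 : Q = ((a * t + b / 2) ^ 2 + 3 / 4 * b ^ 2) / a := by
      rw [hQdef]; field_simp; ring
    rw [h2]
    exact div_pos (by nlinarith [sq_nonneg (a * t + b / 2), mul_pos hb hb]) ha
  have hs : t - b / a ≠ 0 := sub_ne_zero.mpr ht
  have hs2 : (0:ℝ) < (t - b / a) ^ 2 := by positivity
  have hnum : (4 * a * t ^ 3 - 3 * b * t ^ 2 - b ^ 3 / a ^ 2) ^ 2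
      = (t - b / a) ^ 2 * P ^ 2 := by
    rw [hPdef]; field_simp; ring
  have hden : g t - gstar = (t - b / a) ^ 2 * Q := by
    rw [hg, hgstar, hQdef]; field_simp; ring
  have hratio : (4 * a * t ^ 3 - 3 * b * t ^ 2 - b ^ 3 / a ^ 2) ^ 2 / (g t - gstar)
      = P ^ 2 / Q := by
    rw [hnum, hden, mul_div_mul_left _ _ (ne_of_gt hs2)]
  constructor
  · rw [hratio]
    rw [div_add' _ _ _ (ne_of_gt hQ), div_eq_div_iff (ne_of_gt hQ) (ne_of_gt hQ)]
    rw [hPdef, hQdef]; field_simp; ring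
  · rw [hratio, ge_iff_le, div_le_div_iff₀ (by positivity) hQ]
    set u : ℝ := a * t with hu
    have hE : 0 ≤ 448 * u ^ 4 + 224 * b * u ^ 3 + 225 * b ^ 2 * u ^ 2
        + 29 * b ^ 3 * u + b ^ 4 := by
      nlinarith [sq_nonneg (29 * u ^ 2 + 58 * u * b + 4 * b ^ 2),
        sq_nonneg (55 * u ^ 2 + 2 * u * b), sq_nonneg (u ^ 2)]
    have hid : a ^ 2 * (P ^ 2 * (28 * a) - 27 * b ^ 2 * Q)
        = a * (448 * u ^ 4 + 224 * b * u ^ 3 + 225 * b ^ 2 * u ^ 2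
            + 29 * b ^ 3 * u + b ^ 4) := by
      rw [hPdef, hQdef, hu]; field_simp; ring
    have h3 : 0 ≤ a ^ 2 * (P ^ 2 * (28 * a) - 27 * b ^ 2 * Q) := by
      rw [hid]; exact mul_nonneg ha.le hE
    have ha2 : (a ^ 2 : ℝ) ≠ 0 := by positivity
    have h4 := mul_nonneg (inv_nonneg.mpr (by positivity : (0:ℝ) ≤ a ^ 2)) h3
    rw [inv_mul_cancel_left₀ ha2] at h4
    linarith [h4]
end

section
/- Let η, L, μ, ε > 0 and g_0 ≠ 0 with g_0² < η²L². Suppose β_0 = 0, β_{k+1} = β_k + g_k², g_k² ≥ μ(f_k − f*) with f_k ≥ f*, and β_{k+1} < η²L² for k = 0,…,T−1, and min_{0 ≤ k ≤ T−1}(f_k − f*) > ε. Then, using β_T = g_0² ∏_{k=1}^{T−1}(1 + g_k²/β_k), one obtains η²L² > g_0² (1 + με/(η²L²))^{T−1}, and hence T < 1 + (η²L²/(με) + 1) log(η²L²/g_0²). -/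
theorem stmt_19 (β g f : ℕ → ℝ) (fstar η L μ ε : ℝ)
    (hη : 0 < η) (hL : 0 < L) (hμ : 0 < μ) (hε : 0 < ε)
    (hg0 : g 0 ≠ 0) (hg0small : (g 0) ^ 2 < η ^ 2 * L ^ 2)
    (hβ0 : β 0 = 0) (hrec : ∀ k, β (k + 1) = β k + (g k) ^ 2)
    (hPL : ∀ k, μ * (f k - fstar) ≤ (g k) ^ 2) (hf : ∀ k, fstar ≤ f k)
    (T : ℕ) (hT1 : 1 ≤ T)
    (hβ : ∀ k < T, β (k + 1) < η ^ 2 * L ^ 2)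
    (hmin : ∀ k < T, ε < f k - fstar) :
    η ^ 2 * L ^ 2 > (g 0) ^ 2 * (1 + μ * ε / (η ^ 2 * L ^ 2)) ^ (T - 1) ∧
      (T : ℝ) < 1 + (η ^ 2 * L ^ 2 / (μ * ε) + 1)
        * Real.log (η ^ 2 * L ^ 2 / (g 0) ^ 2) := by
  set A := η ^ 2 * L ^ 2 with hA
  have hApos : 0 < A := by positivity
  have hg0sq : 0 < (g 0) ^ 2 := by
    have h := pow_ne_zero 2 hg0
    have := sq_nonneg (g 0)
    rcases lt_or_eq_of_le this with h1 | h1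
    · simpa [sq] using h1
    · exact absurd h1.symm (by simpa [sq] using h)
  have hμε : 0 < μ * ε := by positivity
  set x := μ * ε / A with hx
  have hxpos : 0 < x := by positivity
  set c := 1 + x with hc
  have hc1 : 1 < c := by simp [hc]; linarith
  have hcpos : 0 < c := by linarith
  have hgk : ∀ k < T, μ * ε < (g k) ^ 2 := by
    intro k hk
    have h1 := hmin k hk
    have h2 := hPL k
    nlinarith
  -- key induction
  have key : ∀ k, 1 ≤ k → k ≤ T → (g 0) ^ 2 * c ^ (k - 1) ≤ β k := by
    intro k
    induction k with
    | zero => intro h; omega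
    | succ n ih =>
      intro _ hle
      rcases Nat.eq_zero_or_pos n with h0 | hpos
      · subst h0
        simp [hrec 0, hβ0]
      · have hnT : n < T := by omega
        have hβn : β n < A := by
          have := hβ (n - 1) (by omega)
          rwa [Nat.sub_add_cancel hpos] at this
        have ihn := ih hpos (le_of_lt hnT)
        have hβnpos : 0 < β n := lt_of_lt_of_le (by positivity) ihn
        have hgn := hgk n hnT
        have hstep : β n * c ≤ β (n + 1) := by
          rw [hrec n, hc]
          have h1 : β n * x ≤ μ * ε := by
            calc β n * x ≤ A * x := mul_le_mul_of_nonneg_right hβn.le hxpos.le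
              _ = μ * ε := by rw [hx]; field_simp
          nlinarith
        have : (g 0) ^ 2 * c ^ (n + 1 - 1) = ((g 0) ^ 2 * c ^ (n - 1)) * c := by
          rw [mul_assoc, ← pow_succ, Nat.succ_sub_one, Nat.sub_add_cancel hpos]
        rw [this]
        calc ((g 0) ^ 2 * c ^ (n - 1)) * c ≤ β n * c :=
              mul_le_mul_of_nonneg_right ihn hcpos.le
          _ ≤ β (n + 1) := hstep
  have hβT : β T < A := by
    have := hβ (T - 1) (by omega)
    rwa [Nat.sub_add_cancel hT1] at this
  have part1 : (g 0) ^ 2 * c ^ (T - 1) < A :=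
    lt_of_le_of_lt (key T hT1 le_rfl) hβT
  refine ⟨part1, ?_⟩
  -- part 2
  have hR : 1 < A / (g 0) ^ 2 := (one_lt_div hg0sq).2 hg0small
  have hRlog : 0 < Real.log (A / (g 0) ^ 2) := Real.log_pos hR
  have hpowlt : c ^ (T - 1) < A / (g 0) ^ 2 := by
    rw [lt_div_iff₀ hg0sq]
    nlinarith [part1]
  have hloglt : ((T - 1 : ℕ) : ℝ) * Real.log c < Real.log (A / (g 0) ^ 2) := by
    have := Real.log_lt_log (pow_pos hcpos (T - 1)) hpowlt
    rwa [Real.log_pow] at this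
  have hlogc : x / c ≤ Real.log c := by
    have h := Real.log_le_sub_one_of_pos (show (0:ℝ) < c⁻¹ by positivity)
    rw [Real.log_inv] at h
    have : 1 - c⁻¹ = x / c := by field_simp [hc]; linarith
    linarith [this ▸ (by linarith : 1 - c⁻¹ ≤ Real.log c)]
  have hTm1 : ((T - 1 : ℕ) : ℝ) * (x / c) < Real.log (A / (g 0) ^ 2) := by
    have h1 : ((T - 1 : ℕ) : ℝ) * (x / c) ≤ ((T - 1 : ℕ) : ℝ) * Real.log c :=
      mul_le_mul_of_nonneg_left hlogc (Nat.cast_nonneg _)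
    linarith
  have hxc : 0 < x / c := by positivity
  have hfinal : ((T - 1 : ℕ) : ℝ) < Real.log (A / (g 0) ^ 2) * (c / x) := by
    have hcx0 : 0 < c / x := by positivity
    calc ((T - 1 : ℕ) : ℝ) = ((T - 1 : ℕ) : ℝ) * (x / c) * (c / x) := by
          field_simp
      _ < Real.log (A / (g 0) ^ 2) * (c / x) :=
          mul_lt_mul_of_pos_right hTm1 hcx0
  have hcx : c / x = A / (μ * ε) + 1 := by
    rw [hc, hx]; field_simp
  rw [hcx] at hfinal
  have hcast : ((T - 1 : ℕ) : ℝ) = (T : ℝ) - 1 := by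
    have := Nat.cast_sub hT1 (R := ℝ)
    simpa using this
  rw [hcast] at hfinal
  linarith
end
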